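/- Let n > 2 be an integer. The state complexity of the square root operation at n equals n^n − n(n−1)/2; that is: (i) for every regular language L over any finite alphabet with sc(L) = n, sc(√L) ≤ n^n − n(n−1)/2, and (ii) there exist a finite alphabet Σ and a regular language L over Σ with sc(L) = n and sc(√L) = n^n − n(n−1)/2. -/
import Mathlib


/-- `L` is recognized by some complete DFA with exactly `n` states. -/
def recognizedBy {α : Type} (L : Language α) (n : ℕ) : Prop :=
  ∃ M : DFA α (Fin n), M.accepts = L

/-- The state complexity of a language: the minimal number of states of a
complete DFA recognizing it. -/
noncomputable def sc {α : Type} (L : Language α) : ℕ :=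
  sInf {n | recognizedBy L n}

/-- The square root of a language: `√L = {w | w·w ∈ L}`. -/
def sqrtLang {α : Type} (L : Language α) : Language α :=
  {w | w ++ w ∈ L}


section Pad
variable {α : Type} {Q : Type} [Fintype Q]

/-- Padding: a DFA on a fintype `Q` yields a DFA on `Fin m` for `m ≥ card Q`. -/
lemma recognizedBy_of_card_le (M : DFA α Q) {m : ℕ} (h : Fintype.card Q ≤ m) :
    recognizedBy M.accepts m := by
  classical
  have hne : Nonempty Q := ⟨M.start⟩
  let e := Fintype.equivFin Q
  let ι : Q → Fin m := fun q => Fin.castLE h (e q)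
  have hι : Function.Injective ι := by
    intro a b hab
    apply e.injective
    exact Fin.castLE_injective h hab
  let π : Fin m → Q := Function.invFun ι
  have hπι : ∀ q, π (ι q) = q := Function.leftInverse_invFun hι
  let B : DFA α (Fin m) :=
    ⟨fun s a => ι (M.step (π s) a), ι M.start, {s | π s ∈ M.accept}⟩
  refine ⟨B, ?_⟩
  have key : ∀ (w : List α) (q : Q), B.evalFrom (ι q) w = ι (M.evalFrom q w) := by
    intro w
    induction w with
    | nil => intro q; rfl
    | cons a w ih =>
      intro q
      show B.evalFrom (B.step (ι q) a) w = _
      have : B.step (ι q) a = ι (M.step q a) := by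
        show ι (M.step (π (ι q)) a) = _
        rw [hπι]
      rw [this, ih]
      rfl
  ext w
  rw [DFA.mem_accepts, DFA.mem_accepts]
  show B.evalFrom (ι M.start) w ∈ B.accept ↔ _
  rw [key]
  show π (ι (M.evalFrom M.start w)) ∈ M.accept ↔ _
  rw [hπι]
  rfl

lemma sc_le {L : Language α} {m : ℕ} (h : recognizedBy L m) : sc L ≤ m :=
  Nat.sInf_le h

/-- Lower bound on state complexity from pairwise distinguishable words. -/
lemma le_sc {L : Language α} (hne : ∃ m, recognizedBy L m)
    {T : Type} [Fintype T] (w : T → List α)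
    (hw : ∀ s t : T, s ≠ t → ∃ u, ¬((w s ++ u ∈ L) ↔ (w t ++ u ∈ L))) :
    Fintype.card T ≤ sc L := by
  have hmem : recognizedBy L (sc L) := Nat.sInf_mem hne
  obtain ⟨M, hM⟩ := hmem
  have hMx : ∀ x, x ∈ L ↔ x ∈ M.accepts := fun x => (Set.ext_iff.1 hM x).symm
  have : Function.Injective (fun t => M.evalFrom M.start (w t)) := by
    intro s t hst
    by_contra hne'
    obtain ⟨u, hu⟩ := hw s t hne'
    apply hu
    have h1 : ∀ v, (w v ++ u ∈ L) ↔ M.evalFrom (M.evalFrom M.start (w v)) u ∈ M.accept := by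
      intro v
      rw [hMx, show (w v ++ u ∈ M.accepts) = (M.evalFrom M.start (w v ++ u) ∈ M.accept) from rfl,
        DFA.evalFrom_of_append]
    simp only at hst
    rw [h1, h1, hst]
  simpa using Fintype.card_le_of_injective _ this
end Pad


open Classical in
/-- The two-valued function taking value `a` on `F` and `b` elsewhere. -/
noncomputable def twoVal {n : ℕ} (F : Set (Fin n)) (a b : Fin n) : Fin n → Fin n :=
  fun x => if x ∈ F then a else b

/-- A helper transformation with prescribed values at three points. -/
def upd3 {n : ℕ} (z1 z2 z3 v1 v2 v3 : Fin n) : Fin n → Fin n :=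
  fun t => if t = z1 then v1 else if t = z2 then v2 else if t = z3 then v3 else t

/-- The two orientations of a two-valued function are behaviourally equivalent. -/
lemma mergeEquiv {n : ℕ} (F : Set (Fin n)) (a b q0 : Fin n) (h : Fin n → Fin n) :
    (h (twoVal F a b (h (twoVal F a b q0))) ∈ F ↔
      h (twoVal F b a (h (twoVal F b a q0))) ∈ F) := by
  classical
  by_cases hq : q0 ∈ F <;> by_cases ha : h a ∈ F <;> by_cases hb : h b ∈ F <;>
    simp [twoVal, hq, ha, hb]

/-- Key lemma: two behaviourally equivalent transformations are equal or form a
merged two-valued pair. -/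
lemma keyLemma {n : ℕ} {F : Set (Fin n)} {x₁ x₂ : Fin n} (hx₁ : x₁ ∈ F) (hx₂ : x₂ ∉ F)
    {q0 : Fin n} {f g : Fin n → Fin n}
    (H : ∀ h : Fin n → Fin n, (h (f (h (f q0))) ∈ F ↔ h (g (h (g q0))) ∈ F)) :
    f = g ∨ ∃ a b : Fin n, a ≠ b ∧ f = twoVal F a b ∧ g = twoVal F b a := by
  classical
  set p := f q0 with hp
  set q := g q0 with hq
  by_cases hpq : p = q
  · -- equal heads: f = g
    left
    funext x
    by_contra hfg
    set a := f x with hax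
    set b := g x with hbx
    by_cases hap : a = p
    · -- f x = p, g x ≠ p
      have hbp : b ≠ p := fun e => hfg (by rw [hap, e])
      set β : Fin n := if x ∈ F then x₂ else x₁ with hβ
      have h3 := H (upd3 p b b x β β)
      have e1 : upd3 p b b x β β p = x := by simp [upd3]
      have e2 : upd3 p b b x β β b = β := by simp [upd3, hbp]
      rw [← hpq, e1, ← hax, ← hbx, hap, e1, e2] at h3
      by_cases hxF : x ∈ F
      · rw [hβ] at h3; simp [hxF] at h3; exact hx₂ h3
      · rw [hβ] at h3; simp [hxF] at h3; exact h3 hx₁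
    · by_cases hbp : b = p
      · set β : Fin n := if x ∈ F then x₂ else x₁ with hβ
        have h3 := H (upd3 p a a x β β)
        have e1 : upd3 p a a x β β p = x := by simp [upd3]
        have e2 : upd3 p a a x β β a = β := by simp [upd3, hap]
        rw [← hpq, e1, ← hax, ← hbx, hbp, e1, e2] at h3
        by_cases hxF : x ∈ F
        · rw [hβ] at h3; simp [hxF] at h3; exact hx₂ h3
        · rw [hβ] at h3; simp [hxF] at h3; exact h3 hx₁
      · -- a ≠ p, b ≠ p, a ≠ b
        have hab : a ≠ b := fun e => hfg (hax ▸ hbx ▸ e)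
        have h3 := H (upd3 p a b x x₁ x₂)
        have e1 : upd3 p a b x x₁ x₂ p = x := by simp [upd3]
        have e2 : upd3 p a b x x₁ x₂ a = x₁ := by simp [upd3, hap]
        have e3 : upd3 p a b x x₁ x₂ b = x₂ := by simp [upd3, hbp, (Ne.symm hab)]
        rw [← hpq, e1, ← hax, ← hbx, e2, e3] at h3
        exact hx₂ (h3.1 hx₁)
  · -- distinct heads
    right
    -- every value of f is p or q
    have Hf : ∀ x, f x = p ∨ f x = q := by
      intro x
      by_contra hc
      push_neg at hc
      obtain ⟨hc1, hc2⟩ := hc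
      set c := f x with hcx
      set α : Fin n := if q0 ∈ F then x₂ else x₁ with hα
      have h3 := H (upd3 p q c x q0 α)
      have e1 : upd3 p q c x q0 α p = x := by simp [upd3]
      have e2 : upd3 p q c x q0 α q = q0 := by simp [upd3, (Ne.symm hpq)]
      have e3 : upd3 p q c x q0 α c = α := by simp [upd3, hc1, hc2]
      rw [e1, ← hcx, e3, e2, ← hq, e2] at h3
      by_cases hq0F : q0 ∈ F
      · rw [hα] at h3; simp [hq0F] at h3; exact hx₂ h3
      · rw [hα] at h3; simp [hq0F] at h3; exact h3 hx₁
    have Hg : ∀ x, g x = p ∨ g x = q := by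
      intro x
      by_contra hc
      push_neg at hc
      obtain ⟨hc1, hc2⟩ := hc
      set c := g x with hcx
      set α : Fin n := if q0 ∈ F then x₂ else x₁ with hα
      have h3 := H (upd3 q p c x q0 α)
      have e1 : upd3 q p c x q0 α q = x := by simp [upd3]
      have e2 : upd3 q p c x q0 α p = q0 := by simp [upd3, hpq]
      have e3 : upd3 q p c x q0 α c = α := by simp [upd3, hc1, hc2]
      rw [e2, ← hp, e2, e1, ← hcx, e3] at h3
      by_cases hq0F : q0 ∈ F
      · rw [hα] at h3; simp [hq0F] at h3; exact hx₂ h3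
      · rw [hα] at h3; simp [hq0F] at h3; exact h3 hx₁
    -- the transfer rule
    have Rule : ∀ x y : Fin n, ((x ∈ F ∧ y ∉ F) ∨ (x ∉ F ∧ y ∈ F)) →
        (f x = p ↔ g y = p) := by
      intro x y hxy
      have h3 := H (upd3 p q q x y y)
      have e1 : upd3 p q q x y y p = x := by simp [upd3]
      have e2 : upd3 p q q x y y q = y := by simp [upd3, (Ne.symm hpq)]
      rw [e1, e2] at h3
      rcases Hf x with h1 | h1 <;> rcases Hg y with h2 | h2
      · rw [h1, h2]
      · rw [h1, e1, h2, e2] at h3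
        rcases hxy with ⟨hx, hy⟩ | ⟨hx, hy⟩
        · exact absurd (h3.1 hx) hy
        · exact absurd (h3.2 hy) hx
      · rw [h1, e2, h2, e1] at h3
        rcases hxy with ⟨hx, hy⟩ | ⟨hx, hy⟩
        · exact absurd (h3.2 hx) hy
        · exact absurd (h3.1 hy) hx
      · constructor
        · intro e; exact absurd (e.symm.trans h1) hpq
        · intro e; exact absurd (e.symm.trans h2) hpq
    by_cases hq0F : q0 ∈ F
    · refine ⟨p, q, hpq, ?_, ?_⟩
      · funext x
        show f x = twoVal F p q x
        unfold twoVal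
        by_cases hxF : x ∈ F
        · rw [if_pos hxF]
          have : g x₂ = p := (Rule q0 x₂ (Or.inl ⟨hq0F, hx₂⟩)).1 hp.symm
          exact (Rule x x₂ (Or.inl ⟨hxF, hx₂⟩)).2 this
        · rw [if_neg hxF]
          have : f x ≠ p := fun e =>
            hpq (hq.trans ((Rule x q0 (Or.inr ⟨hxF, hq0F⟩)).1 e)).symm
          rcases Hf x with h1 | h1
          · exact absurd h1 this
          · exact h1
      · funext x
        show g x = twoVal F q p x
        unfold twoVal
        by_cases hxF : x ∈ F
        · rw [if_pos hxF]
          -- f x₂ = q, hence g x ≠ p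
          have hf2 : f x₂ = q := by
            have : f x₂ ≠ p := fun e =>
              hpq (hq.trans ((Rule x₂ q0 (Or.inr ⟨hx₂, hq0F⟩)).1 e)).symm
            rcases Hf x₂ with h1 | h1
            · exact absurd h1 this
            · exact h1
          have : g x ≠ p := fun e => by
            have h5 := (Rule x₂ x (Or.inr ⟨hx₂, hxF⟩)).2 e
            exact hpq (h5.symm.trans hf2)
          rcases Hg x with h1 | h1
          · exact absurd h1 this
          · exact h1
        · rw [if_neg hxF]
          exact (Rule q0 x (Or.inl ⟨hq0F, hxF⟩)).1 hp.symm
    · refine ⟨q, p, Ne.symm hpq, ?_, ?_⟩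
      · funext x
        show f x = twoVal F q p x
        unfold twoVal
        by_cases hxF : x ∈ F
        · rw [if_pos hxF]
          have : f x ≠ p := fun e =>
            hpq (hq.trans ((Rule x q0 (Or.inl ⟨hxF, hq0F⟩)).1 e)).symm
          rcases Hf x with h1 | h1
          · exact absurd h1 this
          · exact h1
        · rw [if_neg hxF]
          have hg1 : g x₁ = p := (Rule q0 x₁ (Or.inr ⟨hq0F, hx₁⟩)).1 hp.symm
          exact (Rule x x₁ (Or.inr ⟨hxF, hx₁⟩)).2 hg1
      · funext x
        show g x = twoVal F p q x
        unfold twoVal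
        by_cases hxF : x ∈ F
        · rw [if_pos hxF]
          exact (Rule q0 x (Or.inr ⟨hq0F, hxF⟩)).1 hp.symm
        · rw [if_neg hxF]
          have hf1 : f x₁ = q := by
            have : f x₁ ≠ p := fun e =>
              hpq (hq.trans ((Rule x₁ q0 (Or.inl ⟨hx₁, hq0F⟩)).1 e)).symm
            rcases Hf x₁ with h1 | h1
            · exact absurd h1 this
            · exact h1
          have : g x ≠ p := fun e => by
            have h5 := (Rule x₁ x (Or.inl ⟨hx₁, hxF⟩)).2 e
            exact hpq (h5.symm.trans hf1)
          rcases Hg x with h1 | h1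
          · exact absurd h1 this
          · exact h1


/-- The set of "bad" (non-representative) two-valued functions. -/
def BadSet {n : ℕ} (F : Set (Fin n)) : Set (Fin n → Fin n) :=
  {f | ∃ p q : Fin n, p < q ∧ f = twoVal F q p}

lemma twoVal_inj {n : ℕ} {F : Set (Fin n)} {x₁ x₂ : Fin n}
    (hx₁ : x₁ ∈ F) (hx₂ : x₂ ∉ F) {a b a' b' : Fin n}
    (h : twoVal F a b = twoVal F a' b') : a = a' ∧ b = b' := by
  constructor
  · have := congrFun h x₁; simpa [twoVal, hx₁] using this
  · have := congrFun h x₂; simpa [twoVal, hx₂] using this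

lemma card_pairs (n : ℕ) :
    Fintype.card {pq : Fin n × Fin n // pq.1 < pq.2} = n * (n - 1) / 2 := by
  classical
  have e1 : {pq : Fin n × Fin n // pq.1 < pq.2} ≃ Σ j : Fin n, {i : Fin n // i < j} :=
    { toFun := fun x => ⟨x.1.2, ⟨x.1.1, x.2⟩⟩
      invFun := fun x => ⟨(x.2.1, x.1), x.2.2⟩
      left_inv := fun ⟨⟨p, q⟩, h⟩ => rfl
      right_inv := fun ⟨j, ⟨i, h⟩⟩ => rfl }
  have e2 : ∀ j : Fin n, {i : Fin n // i < j} ≃ Fin (j : ℕ) :=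
    fun j =>
    { toFun := fun x => ⟨(x.1 : ℕ), x.2⟩
      invFun := fun k => ⟨⟨(k : ℕ), lt_trans k.2 j.2⟩, k.2⟩
      left_inv := fun ⟨i, h⟩ => rfl
      right_inv := fun k => rfl }
  rw [Fintype.card_congr e1, Fintype.card_sigma]
  have : ∀ j : Fin n, Fintype.card {i : Fin n // i < j} = (j : ℕ) := by
    intro j; rw [Fintype.card_congr (e2 j), Fintype.card_fin]
  simp only [this]
  rw [Fin.sum_univ_eq_sum_range (fun i => i) n]
  exact Finset.sum_range_id n

open Classical in
lemma card_notBad {n : ℕ} {F : Set (Fin n)} {x₁ x₂ : Fin n}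
    (hx₁ : x₁ ∈ F) (hx₂ : x₂ ∉ F) :
    Fintype.card {f : Fin n → Fin n // f ∉ BadSet F} = n ^ n - n * (n - 1) / 2 := by
  classical
  have hbad : Fintype.card {f : Fin n → Fin n // f ∈ BadSet F} = n * (n - 1) / 2 := by
    rw [← card_pairs n]
    refine (Fintype.card_congr (Equiv.ofBijective
      (fun x : {pq : Fin n × Fin n // pq.1 < pq.2} =>
        (⟨twoVal F x.1.2 x.1.1, ⟨x.1.1, x.1.2, x.2, rfl⟩⟩ :
          {f : Fin n → Fin n // f ∈ BadSet F})) ⟨?_, ?_⟩)).symm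
    · rintro ⟨⟨p, q⟩, h⟩ ⟨⟨p', q'⟩, h'⟩ he
      have h1 : twoVal F q p = twoVal F q' p' := congrArg Subtype.val he
      have h2 := twoVal_inj hx₁ hx₂ h1
      exact Subtype.ext (Prod.ext h2.2 h2.1)
    · rintro ⟨f, ⟨p, q, h, rfl⟩⟩
      exact ⟨⟨(p, q), h⟩, rfl⟩
  have htot : Fintype.card (Fin n → Fin n) = n ^ n := by
    simp [Fintype.card_fun]
  calc Fintype.card {f : Fin n → Fin n // f ∉ BadSet F}
      = Fintype.card (Fin n → Fin n) -
        Fintype.card {f : Fin n → Fin n // f ∈ BadSet F} :=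
        Fintype.card_subtype_compl _
    _ = n ^ n - n * (n - 1) / 2 := by rw [hbad, htot]

/-- Upper bound: from an `n`-state DFA with nontrivial accepting set, the square root
of its language is recognized with `n^n - n(n-1)/2` states. -/
lemma sqrt_upper {Γ : Type} {n : ℕ} (M : DFA Γ (Fin n))
    (hF1 : ∃ x, x ∈ M.accept) (hF2 : ∃ x, x ∉ M.accept) :
    recognizedBy (sqrtLang M.accepts) (n ^ n - n * (n - 1) / 2) := by
  classical
  obtain ⟨x₁, hx₁⟩ := hF1
  obtain ⟨x₂, hx₂⟩ := hF2
  letI st : Setoid (Fin n → Fin n) :=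
    ⟨fun f g => ∀ h : Fin n → Fin n,
        (h (f (h (f M.start))) ∈ M.accept ↔ h (g (h (g M.start))) ∈ M.accept),
      ⟨fun f h => Iff.rfl, fun hfg h => (hfg h).symm, fun h1 h2 h => (h1 h).trans (h2 h)⟩⟩
  have stepwd : ∀ (a : Γ) (f g : Fin n → Fin n),
      (∀ h : Fin n → Fin n,
        (h (f (h (f M.start))) ∈ M.accept ↔ h (g (h (g M.start))) ∈ M.accept)) →
      (∀ h : Fin n → Fin n,
        (h ((fun x => M.step (f x) a) (h ((fun x => M.step (f x) a) M.start))) ∈ M.accept ↔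
         h ((fun x => M.step (g x) a) (h ((fun x => M.step (g x) a) M.start))) ∈ M.accept)) :=
    fun a f g hfg h => hfg (fun t => h (M.step t a))
  have accwd : ∀ f g : Fin n → Fin n,
      (∀ h : Fin n → Fin n,
        (h (f (h (f M.start))) ∈ M.accept ↔ h (g (h (g M.start))) ∈ M.accept)) →
      (f (f M.start) ∈ M.accept) = (g (g M.start) ∈ M.accept) :=
    fun f g hfg => propext (hfg id)
  let B : DFA Γ (Quotient st) :=
    { step := fun qf a => Quotient.map (fun f => fun x => M.step (f x) a) (fun f g hfg => stepwd a f g hfg) qf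
      start := ⟦id⟧
      accept := {qf | Quotient.lift (fun f => f (f M.start) ∈ M.accept) accwd qf} }
  have ev : ∀ (w : List Γ) (f : Fin n → Fin n),
      B.evalFrom ⟦f⟧ w = ⟦fun x => M.evalFrom (f x) w⟧ := by
    intro w
    induction w with
    | nil => intro f; rfl
    | cons a w ih =>
      intro f
      show B.evalFrom (B.step ⟦f⟧ a) w = _
      have hstep : B.step ⟦f⟧ a = ⟦fun x => M.step (f x) a⟧ := rfl
      rw [hstep, ih]
      rfl
  have hBacc : B.accepts = sqrtLang M.accepts := by
    ext w
    rw [DFA.mem_accepts]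
    show B.evalFrom ⟦id⟧ w ∈ B.accept ↔ _
    rw [ev w id]
    show M.evalFrom (M.evalFrom M.start w) w ∈ M.accept ↔ _
    rw [← DFA.evalFrom_of_append]
    rfl
  have hcard : Fintype.card (Quotient st) ≤ n ^ n - n * (n - 1) / 2 := by
    rw [← card_notBad hx₁ hx₂]
    apply Fintype.card_le_of_surjective
      (fun x : {f : Fin n → Fin n // f ∉ BadSet M.accept} => (⟦x.val⟧ : Quotient st))
    intro qf
    obtain ⟨f, rfl⟩ := Quotient.exists_rep qf
    by_cases hf : f ∈ BadSet M.accept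
    · obtain ⟨p, q, hlt, rfl⟩ := hf
      refine ⟨⟨twoVal M.accept p q, ?_⟩, Quotient.sound ?_⟩
      · rintro ⟨p', q', hlt', he⟩
        obtain ⟨h1, h2⟩ := twoVal_inj hx₁ hx₂ he
        exact absurd hlt (lt_asymm (h1 ▸ h2 ▸ hlt'))
      · exact fun h => mergeEquiv M.accept p q M.start h
    · exact ⟨⟨f, hf⟩, rfl⟩
  have := recognizedBy_of_card_le B hcard
  rwa [hBacc] at this

lemma witness (n : ℕ) (hn : 2 < n) :
    ∃ (Γ : Type) (_ : Fintype Γ) (L : Language Γ),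
      (∃ m, recognizedBy L m) ∧ sc L = n ∧
      sc (sqrtLang L) = n ^ n - n * (n - 1) / 2 := by
  classical
  set z0 : Fin n := ⟨0, by omega⟩ with hz0
  set z1 : Fin n := ⟨1, by omega⟩ with hz1
  have hz01 : z1 ≠ z0 := by simp [hz0, hz1, Fin.ext_iff]
  set Γ := (Fin n → Fin n) with hΓ
  let M₀ : DFA Γ (Fin n) := ⟨fun q a => a q, z0, {z0}⟩
  set L := M₀.accepts with hL
  have hx₁ : z0 ∈ ({z0} : Set (Fin n)) := rfl
  have hx₂ : z1 ∉ ({z0} : Set (Fin n)) := hz01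
  -- evaluation on two/four letter words
  have ev2 : ∀ a b : Γ, M₀.eval [a, b] = b (a z0) := fun a b => rfl
  have ev4 : ∀ a b c d : Γ, M₀.eval [a, b, c, d] = d (c (b (a z0))) := fun a b c d => rfl
  have mem2 : ∀ a b : Γ, ([a, b] ∈ L ↔ b (a z0) = z0) := by
    intro a b
    rw [hL, DFA.mem_accepts, ev2]
    rfl
  have mem4 : ∀ a b c d : Γ, ([a, b, c, d] ∈ L ↔ d (c (b (a z0))) = z0) := by
    intro a b c d
    rw [hL, DFA.mem_accepts, ev4]
    rfl
  have hrec : ∃ m, recognizedBy L m := ⟨n, M₀, rfl⟩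
  have hscL : sc L = n := by
    apply le_antisymm (sc_le ⟨M₀, rfl⟩)
    have := le_sc hrec (T := Fin n) (fun i => [fun _ => i]) ?_
    · simpa using this
    · intro i j hij
      refine ⟨[fun t => if t = i then z0 else z1], ?_⟩
      intro hiff
      have h1 : ([(fun _ => i : Γ), (fun t => if t = i then z0 else z1)] ∈ L) := by
        rw [mem2]; simp
      have h2 : ([(fun _ => j : Γ), (fun t => if t = i then z0 else z1)] ∈ L) := by
        rw [show [(fun _ => j : Γ)] ++ [fun t => if t = i then z0 else z1]
            = [(fun _ => j : Γ), fun t => if t = i then z0 else z1] from rfl] at hiff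
        exact hiff.1 h1
      rw [mem2] at h2
      simp [Ne.symm hij] at h2
      exact hz01 h2
  have hF1 : ∃ x, x ∈ M₀.accept := ⟨z0, rfl⟩
  have hF2 : ∃ x, x ∉ M₀.accept := ⟨z1, hz01⟩
  have hup := sqrt_upper M₀ hF1 hF2
  have hsqrt : sc (sqrtLang L) = n ^ n - n * (n - 1) / 2 := by
    apply le_antisymm (sc_le hup)
    have hkey : ∀ s t : {f : Fin n → Fin n // f ∉ BadSet ({z0} : Set (Fin n))},
        s ≠ t → ∃ u, ¬(([s.val] ++ u ∈ sqrtLang L) ↔ ([t.val] ++ u ∈ sqrtLang L)) := by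
      rintro ⟨f, hf⟩ ⟨g, hg⟩ hst
      have hfg : f ≠ g := fun e => hst (Subtype.ext e)
      have hH : ∃ h : Fin n → Fin n,
          ¬((h (f (h (f z0))) ∈ ({z0} : Set (Fin n))) ↔
            (h (g (h (g z0))) ∈ ({z0} : Set (Fin n)))) := by
        by_contra hc
        push_neg at hc
        have H : ∀ h : Fin n → Fin n,
            (h (f (h (f z0))) ∈ ({z0} : Set (Fin n)) ↔
             h (g (h (g z0))) ∈ ({z0} : Set (Fin n))) := by
          intro h
          have := hc h
          tauto
        rcases keyLemma hx₁ hx₂ H with he | ⟨a, b, hab, hfa, hgb⟩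
        · exact hfg he
        · rcases lt_trichotomy a b with h1 | h1 | h1
          · exact hg ⟨a, b, h1, hgb⟩
          · exact hab h1
          · exact hf ⟨b, a, h1, hfa⟩
      obtain ⟨h, hh⟩ := hH
      refine ⟨[h], ?_⟩
      intro hiff
      apply hh
      have e1 : ([f] ++ [h] ∈ sqrtLang L) ↔ h (f (h (f z0))) ∈ ({z0} : Set (Fin n)) := by
        show ([f, h] ++ [f, h] ∈ L) ↔ _
        rw [show ([f, h] ++ [f, h] : List Γ) = [f, h, f, h] from rfl, mem4]
        rfl
      have e2 : ([g] ++ [h] ∈ sqrtLang L) ↔ h (g (h (g z0))) ∈ ({z0} : Set (Fin n)) := by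
        show ([g, h] ++ [g, h] ∈ L) ↔ _
        rw [show ([g, h] ++ [g, h] : List Γ) = [g, h, g, h] from rfl, mem4]
        rfl
      rw [← e1, ← e2]
      exact hiff
    have := le_sc ⟨_, hup⟩
      (T := {f : Fin n → Fin n // f ∉ BadSet ({z0} : Set (Fin n))})
      (fun s => [s.val]) hkey
    rwa [card_notBad hx₁ hx₂] at this
  exact ⟨Γ, inferInstance, L, hrec, hscL, hsqrt⟩

lemma sqrt_sc_le {Γ : Type} (L : Language Γ) (n : ℕ) (hn : 2 < n)
    (hrec : ∃ m, recognizedBy L m) (hscL : sc L = n) :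
    sc (sqrtLang L) ≤ n ^ n - n * (n - 1) / 2 := by
  classical
  have hne : {m | recognizedBy L m}.Nonempty := hrec
  have hM : recognizedBy L (sc L) := Nat.sInf_mem hne
  rw [hscL] at hM
  obtain ⟨M, hML⟩ := hM
  have hF1 : ∃ x, x ∈ M.accept := by
    by_contra hc
    push_neg at hc
    have hLe : L = (∅ : Set (List Γ)) := by
      rw [← hML]
      ext w
      rw [DFA.mem_accepts]
      exact iff_of_false (hc _) (Set.notMem_empty _)
    have h1 : recognizedBy L 1 := by
      refine ⟨⟨fun _ _ => 0, 0, ∅⟩, ?_⟩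
      rw [hLe]
      ext w
      rw [DFA.mem_accepts]
      exact iff_of_false (Set.notMem_empty _) (Set.notMem_empty _)
    have := sc_le h1
    rw [hscL] at this
    omega
  have hF2 : ∃ x, x ∉ M.accept := by
    by_contra hc
    push_neg at hc
    have hLe : L = (Set.univ : Set (List Γ)) := by
      rw [← hML]
      ext w
      rw [DFA.mem_accepts]
      exact iff_of_true (hc _) (Set.mem_univ _)
    have h1 : recognizedBy L 1 := by
      refine ⟨⟨fun _ _ => 0, 0, Set.univ⟩, ?_⟩
      rw [hLe]
      ext w
      rw [DFA.mem_accepts]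
      exact iff_of_true (Set.mem_univ _) (Set.mem_univ _)
    have := sc_le h1
    rw [hscL] at this
    omega
  have := sqrt_upper M hF1 hF2
  rw [hML] at this
  exact sc_le this

/-- for `n > 2`, the state complexity of the square root operation at `n`
equals `n^n - n(n-1)/2`: (i) every regular language `L` with `sc L = n` satisfies
`sc (√L) ≤ n^n - n(n-1)/2`, and (ii) some regular language attains the bound. -/
theorem stmt8 (n : ℕ) (hn : 2 < n) :
    (∀ (Γ : Type) (_ : Fintype Γ) (L : Language Γ),
      (∃ m, recognizedBy L m) → sc L = n →
      sc (sqrtLang L) ≤ n ^ n - n * (n - 1) / 2) ∧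
    (∃ (Γ : Type) (_ : Fintype Γ) (L : Language Γ),
      (∃ m, recognizedBy L m) ∧ sc L = n ∧
      sc (sqrtLang L) = n ^ n - n * (n - 1) / 2) := by
  constructor
  · intro Γ _ L hrec hscL
    exact sqrt_sc_le L n hn hrec hscL
  · exact witness n hn
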